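/- Let 𝒜 and 𝒴 be finite sets and r a strictly positive joint probability mass function on 𝒜 × 𝒴 with conditionals q_{Y|A}(y|a) = r(a,y)/Σ_{y'} r(a,y') and q_{A|Y}(a|y) = r(a,y)/Σ_{a'} r(a',y). Let (A_1,Y_1),…,(A_n,Y_n) be i.i.d. with law r. Then for every y ∈ 𝒴ⁿ, every multiset S of size n over 𝒜 with P(S(A) = S, Y = y) > 0, every enumeration a = (a_1,…,a_n) of S, and every permutation π of {1,…,n}: P(A = a_π | S(A) = S, Y = y) = ∏_{i=1}^n q_{A|Y}(a_{π(i)}|y_i) / Σ_{π'} ∏_{i=1}^n q_{A|Y}(a_{π'(i)}|y_i) · m(a), where m(a) = ∏_{b ∈ 𝒜} (multiplicity of b in S)! is the constant accounting for repeated values (so that in particular the conditional probability is proportional to ∏_{i=1}^n q_{A|Y}(a_{π(i)}|y_i) as π ranges over all permutations). -/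

import Mathlib

/-- Probability of an event under a probability mass function `p` on a finite sample space. -/
noncomputable def Pr {Ω : Type*} [Fintype Ω] (p : Ω → ℝ) (E : Set Ω) : ℝ :=
  ∑ ω, E.indicator p ω

/-- The unordered multiset of values of a vector. -/
def multisetOf {α : Type*} {n : ℕ} (v : Fin n → α) : Multiset α :=
  Multiset.map v Finset.univ.val


lemma multisetOf_comp_perm {α : Type*} {n : ℕ} (a : Fin n → α) (π : Equiv.Perm (Fin n)) :
    multisetOf (a ∘ π) = multisetOf a := by
  unfold multisetOf
  rw [← Multiset.map_map]
  congr 1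
  have := congrArg Finset.val (Finset.map_univ_equiv π)
  rw [Finset.map_val] at this
  exact this

lemma count_multisetOf {α : Type*} [DecidableEq α] {n : ℕ} (a : Fin n → α) (b : α) :
    Multiset.count b (multisetOf a) = Fintype.card {i // a i = b} := by
  unfold multisetOf
  rw [Multiset.count_map, Fintype.card_subtype]
  congr 1
  simp [eq_comm, Finset.filter_val]

lemma exists_perm_of_multisetOf_eq {α : Type*} [DecidableEq α] {n : ℕ} {a a' : Fin n → α}
    (h : multisetOf a' = multisetOf a) : ∃ π : Equiv.Perm (Fin n), a' = a ∘ π := by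
  have hc : ∀ b, Fintype.card {i // a' i = b} = Fintype.card {i // a i = b} := fun b => by
    rw [← count_multisetOf, ← count_multisetOf, h]
  have e : ∀ b, {i // a' i = b} ≃ {i // a i = b} := fun b => Fintype.equivOfCardEq (hc b)
  let E : Fin n ≃ Fin n :=
    ((Equiv.sigmaFiberEquiv a').symm.trans (Equiv.sigmaCongrRight e)).trans
      (Equiv.sigmaFiberEquiv a)
  refine ⟨E, funext fun i => ?_⟩
  show a' i = a (E i)
  have : E i = (e (a' i) ⟨i, rfl⟩ : {j // a j = a' i}).1 := rfl
  rw [this, (e (a' i) ⟨i, rfl⟩).2]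

lemma card_fiber_perm {α : Type*} [Fintype α] [DecidableEq α] {n : ℕ} {a a' : Fin n → α}
    (h : multisetOf a' = multisetOf a) :
    (Finset.univ.filter fun π' : Equiv.Perm (Fin n) => a ∘ π' = a').card
      = ∏ b : α, (Multiset.count b (multisetOf a)).factorial := by
  obtain ⟨π₀, rfl⟩ := exists_perm_of_multisetOf_eq h
  have hcard : (Finset.univ.filter fun π' : Equiv.Perm (Fin n) => a ∘ π' = a ∘ π₀).card
      = (Finset.univ.filter fun g : Equiv.Perm (Fin n) => a ∘ g = a).card := by
    apply Finset.card_bij' (fun π' _ => π' * π₀⁻¹) (fun g _ => g * π₀)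
    · intro π' hπ'
      simp only [Finset.mem_filter, Finset.mem_univ, true_and] at hπ' ⊢
      funext i
      simpa using congrFun hπ' (π₀⁻¹ i)
    · intro g hg
      simp only [Finset.mem_filter, Finset.mem_univ, true_and] at hg ⊢
      funext i
      simpa using congrFun hg (π₀ i)
    · intro π' _; group
    · intro g _; group
  rw [hcard]
  have : (Finset.univ.filter fun g : Equiv.Perm (Fin n) => a ∘ g = a).card
      = Fintype.card {g : Equiv.Perm (Fin n) // a ∘ g = a} := (Fintype.card_subtype _).symm
  rw [this, DomMulAct.stabilizer_card]
  exact Finset.prod_congr rfl fun b _ => by rw [count_multisetOf]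

lemma sum_comp_perm {α : Type*} [Fintype α] [DecidableEq α] {n : ℕ} (a : Fin n → α) (f : (Fin n → α) → ℝ) :
    ∑ π' : Equiv.Perm (Fin n), f (a ∘ π')
      = (∏ b : α, (Multiset.count b (multisetOf a)).factorial) •
        ∑ a' ∈ Finset.univ.filter (fun a' => multisetOf a' = multisetOf a), f a' := by
  rw [Finset.sum_comp f (fun π' : Equiv.Perm (Fin n) => a ∘ π')]
  have himg : (Finset.univ.image fun π' : Equiv.Perm (Fin n) => a ∘ π')
      = Finset.univ.filter (fun a' => multisetOf a' = multisetOf a) := by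
    ext a'
    simp only [Finset.mem_image, Finset.mem_filter, Finset.mem_univ, true_and]
    constructor
    · rintro ⟨π', _, rfl⟩; exact multisetOf_comp_perm a π'
    · intro h; obtain ⟨π', rfl⟩ := exists_perm_of_multisetOf_eq h; exact ⟨π', rfl⟩
  rw [himg, Finset.smul_sum]
  refine Finset.sum_congr rfl fun a' ha' => ?_
  rw [card_fiber_perm (Finset.mem_filter.mp ha').2]


/-- equation (Alaw): for `(A_i, Y_i)` i.i.d. with strictly positive joint pmf
`r`, the conditional law of the ordered vector `A` given its multiset `S(A) = S(a)` and `Y = y`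
is the conditional permutation distribution:
`P(A = a_π | S(A) = S(a), Y = y)`
`= [∏ᵢ q_{A|Y}(a_{π(i)}|y_i) / ∑_{π'} ∏ᵢ q_{A|Y}(a_{π'(i)}|y_i)] · m(a)`,
where `m(a) = ∏_{b ∈ 𝒜} (multiplicity of b in S(a))!`. -/
theorem stmt_19 {Ω 𝒜 𝒴 : Type*} [Fintype Ω] [Fintype 𝒜] [Fintype 𝒴] [DecidableEq 𝒜]
    (p : Ω → ℝ) (hp0 : ∀ ω, 0 ≤ p ω) (hp1 : ∑ ω, p ω = 1)
    (r : 𝒜 → 𝒴 → ℝ) (hr : ∀ b y0, 0 < r b y0) (hr1 : ∑ b, ∑ y0, r b y0 = 1)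
    {n : ℕ} (hn : 1 ≤ n)
    (A : Ω → Fin n → 𝒜) (Y : Ω → Fin n → 𝒴)
    (hiid : ∀ (a : Fin n → 𝒜) (y : Fin n → 𝒴),
      Pr p {ω | A ω = a ∧ Y ω = y} = ∏ i, r (a i) (y i))
    (y : Fin n → 𝒴) (a : Fin n → 𝒜)
    (hpos : 0 < Pr p {ω | multisetOf (A ω) = multisetOf a ∧ Y ω = y})
    (π : Equiv.Perm (Fin n)) :
    Pr p {ω | A ω = (fun i => a (π i)) ∧ multisetOf (A ω) = multisetOf a ∧ Y ω = y} /
        Pr p {ω | multisetOf (A ω) = multisetOf a ∧ Y ω = y}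
      = (∏ i, (r (a (π i)) (y i) / ∑ b, r b (y i))) /
          (∑ π' : Equiv.Perm (Fin n), ∏ i, (r (a (π' i)) (y i) / ∑ b, r b (y i)))
        * ∏ b : 𝒜, (Nat.factorial (Multiset.count b (multisetOf a)) : ℝ) := by
  classical
  have h𝒜 : Nonempty 𝒜 := by
    by_contra hA
    rw [not_nonempty_iff] at hA
    simp at hr1
  set T := Finset.univ.filter (fun a' : Fin n → 𝒜 => multisetOf a' = multisetOf a) with hT
  set m : ℕ := ∏ b : 𝒜, (Multiset.count b (multisetOf a)).factorial with hmdef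
  -- numerator
  have hnum : Pr p {ω | A ω = (fun i => a (π i)) ∧ multisetOf (A ω) = multisetOf a ∧ Y ω = y}
      = ∏ i, r (a (π i)) (y i) := by
    have hset : {ω | A ω = (fun i => a (π i)) ∧ multisetOf (A ω) = multisetOf a ∧ Y ω = y}
        = {ω | A ω = (fun i => a (π i)) ∧ Y ω = y} := by
      ext ω
      simp only [Set.mem_setOf_eq]
      constructor
      · rintro ⟨h1, _, h3⟩; exact ⟨h1, h3⟩
      · rintro ⟨h1, h3⟩
        exact ⟨h1, by rw [h1]; exact multisetOf_comp_perm a π, h3⟩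
    rw [hset, hiid]
  -- denominator
  have hden : Pr p {ω | multisetOf (A ω) = multisetOf a ∧ Y ω = y}
      = ∑ a' ∈ T, ∏ i, r (a' i) (y i) := by
    have : ∀ a' ∈ T, (∏ i, r (a' i) (y i)) = Pr p {ω | A ω = a' ∧ Y ω = y} :=
      fun a' _ => (hiid a' y).symm
    rw [Finset.sum_congr rfl this]
    unfold Pr
    rw [Finset.sum_comm]
    refine Finset.sum_congr rfl fun ω _ => ?_
    simp only [Set.indicator_apply, Set.mem_setOf_eq]
    by_cases hy : Y ω = y
    · by_cases hm : multisetOf (A ω) = multisetOf a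
      · have hmem : A ω ∈ T := Finset.mem_filter.mpr ⟨Finset.mem_univ _, hm⟩
        have hsgl : (∑ x ∈ T, if A ω = x ∧ Y ω = y then p ω else 0)
            = (if A ω = A ω ∧ Y ω = y then p ω else 0) :=
          Finset.sum_eq_single_of_mem _ hmem fun b _ hb =>
            if_neg (fun h => hb (h.1.symm))
        rw [hsgl, if_pos ⟨hm, hy⟩, if_pos ⟨rfl, hy⟩]
      · rw [if_neg (by rintro ⟨h1, _⟩; exact hm h1)]
        symm
        apply Finset.sum_eq_zero
        intro a' ha'
        rw [if_neg]
        rintro ⟨h1, _⟩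
        exact hm (by rw [h1]; exact (Finset.mem_filter.mp ha').2)
    · rw [if_neg (by rintro ⟨_, h2⟩; exact hy h2)]
      symm
      apply Finset.sum_eq_zero
      intro a' _
      rw [if_neg]
      rintro ⟨_, h2⟩
      exact hy h2
  set N := ∏ i, r (a (π i)) (y i) with hN
  set D := ∑ a' ∈ T, ∏ i, r (a' i) (y i) with hD
  set Z := ∏ i, ∑ b, r b (y i) with hZdef
  have hZ : 0 < Z := Finset.prod_pos fun i _ =>
    Finset.sum_pos (fun b _ => hr b (y i)) Finset.univ_nonempty
  have hDpos : 0 < D := by rwa [hden] at hpos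
  have hq : ∀ π' : Equiv.Perm (Fin n),
      (∏ i, (r (a (π' i)) (y i) / ∑ b, r b (y i))) = (∏ i, r (a (π' i)) (y i)) / Z :=
    fun π' => Finset.prod_div_distrib _ _
  have hsum : (∑ π' : Equiv.Perm (Fin n), ∏ i, (r (a (π' i)) (y i) / ∑ b, r b (y i)))
      = (m : ℝ) * D / Z := by
    rw [Finset.sum_congr rfl (fun π' _ => hq π'), ← Finset.sum_div, hmdef, hD, hT]
    congr 1
    have h1 := sum_comp_perm a (fun a' => ∏ i, r (a' i) (y i))
    simpa [Function.comp, nsmul_eq_mul, Nat.cast_prod] using h1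
  have hM : (∏ b : 𝒜, ((Multiset.count b (multisetOf a)).factorial : ℝ)) = (m : ℝ) := by
    rw [hmdef]; push_cast; ring
  rw [hnum, hden, hq π, hsum, hM]
  have hmpos : 0 < (m : ℝ) := by
    rw [hmdef]
    exact_mod_cast Finset.prod_pos fun b _ => Nat.factorial_pos _
  have hZ' : Z ≠ 0 := ne_of_gt hZ
  have hD' : D ≠ 0 := ne_of_gt hDpos
  have hm' : (m : ℝ) ≠ 0 := ne_of_gt hmpos
  field_simp
  ring
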